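/- Let V be a rank one valuation domain, S ⊆ V, α ∈ V, γ ∈ Γ_v, and let S_{α,γ} = {s ∈ S : v(s - α) = γ}. Then B(α, γ) is contained in the polynomial closure of S_{α,γ} if and only if S_{α,γ} contains a pseudo-monotone sequence E with breadth γ such that either E is pseudo-stationary with pseudo-limit α, or E is pseudo-divergent with a pseudo-limit belonging to S_{α,γ}. Moreover, if V is a DVR, only the pseudo-stationary case can occur. -/

import Mathlib

open Filter Topology Polynomial

lemma rec1 {X : Type*} (T : Set X) (R : X → X → Prop)
    (hT : ∀ F : Finset X, ↑F ⊆ T → ∃ s ∈ T, ∀ t ∈ F, R s t) :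
    ∃ s : ℕ → X, (∀ n, s n ∈ T) ∧ ∀ m n : ℕ, m < n → R (s n) (s m) := by
  classical
  let pick : {F : Finset X // ↑F ⊆ T} → X := fun F => (hT F.1 F.2).choose
  have hpick₁ : ∀ F, pick F ∈ T := fun F => (hT F.1 F.2).choose_spec.1
  have hpick₂ : ∀ F, ∀ t ∈ F.1, R (pick F) t := fun F => (hT F.1 F.2).choose_spec.2
  let G : ℕ → {F : Finset X // ↑F ⊆ T} := fun n => Nat.rec ⟨∅, by simp⟩
    (fun _ p => ⟨insert (pick p) p.1, by
      rw [Finset.coe_insert]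
      exact Set.insert_subset (hpick₁ p) p.2⟩) n
  refine ⟨fun n => pick (G n), fun n => hpick₁ _, ?_⟩
  have hstep : ∀ n, (G n).1 ⊆ (G (n+1)).1 := fun n => Finset.subset_insert _ _
  have hmono : ∀ m n : ℕ, m ≤ n → (G m).1 ⊆ (G n).1 := by
    intro m n hmn
    induction hmn with
    | refl => exact Finset.Subset.refl _
    | step _ ih => exact ih.trans (hstep _)
  intro m n hmn
  have hmem : pick (G m) ∈ (G (m+1)).1 := Finset.mem_insert_self _ _
  exact hpick₂ (G n) _ (hmono (m+1) n hmn hmem)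

lemma nsmul_coe (m : ℕ) (r : ℝ) : m • ((r : WithTop ℝ)) = ((m * r : ℝ) : WithTop ℝ) := by
  induction m with
  | zero => simp
  | succ n ih =>
      rw [succ_nsmul, ih, ← WithTop.coe_add]
      congr 1
      push_cast
      ring

section Helpers

variable {K : Type*} [Field K] (v : AddValuation K (WithTop ℝ))

lemma vprod {ι : Type*} (s : Finset ι) (g : ι → K) :
    v (∏ i ∈ s, g i) = ∑ i ∈ s, v (g i) := by
  classical
  induction s using Finset.cons_induction with
  | empty => simp
  | cons a s ha ih => rw [Finset.prod_cons, Finset.sum_cons, v.map_mul, ih]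

lemma vinv {x : K} {r : ℝ} (h : v x = (r : WithTop ℝ)) : v x⁻¹ = ((-r : ℝ) : WithTop ℝ) := by
  rw [v.map_inv, h]; rfl

lemma term_bound {ι : Type*} (s : Finset ι) (fx : K) (hfx : 0 ≤ v fx)
    (a b : ι → K) (g : ι → ℝ) (γ : ℝ)
    (hg : ∀ j ∈ s, v (a j) = ((g j : ℝ) : WithTop ℝ))
    (hb : ∀ j ∈ s, ((γ : ℝ) : WithTop ℝ) ≤ v (b j)) :
    ((∑ j ∈ s, (γ - g j) : ℝ) : WithTop ℝ) ≤ v (fx * ∏ j ∈ s, ((a j)⁻¹ * b j)) := by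
  rw [v.map_mul, vprod]
  have h1 : ((∑ j ∈ s, (γ - g j) : ℝ) : WithTop ℝ) ≤ ∑ j ∈ s, v ((a j)⁻¹ * b j) := by
    rw [WithTop.coe_sum]
    refine Finset.sum_le_sum fun j hj => ?_
    rw [v.map_mul, vinv v (hg j hj)]
    calc ((γ - g j : ℝ) : WithTop ℝ) = ((-(g j) : ℝ) : WithTop ℝ) + ((γ : ℝ) : WithTop ℝ) := by
          rw [← WithTop.coe_add]; congr 1; ring
      _ ≤ ((-(g j) : ℝ) : WithTop ℝ) + v (b j) := add_le_add le_rfl (hb j hj)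
  calc ((∑ j ∈ s, (γ - g j) : ℝ) : WithTop ℝ)
      = 0 + ((∑ j ∈ s, (γ - g j) : ℝ) : WithTop ℝ) := (zero_add _).symm
    _ ≤ v fx + ∑ j ∈ s, v ((a j)⁻¹ * b j) := add_le_add hfx h1

lemma interp_bound {d : ℕ} (x : Fin (d+1) → K) (hx : Function.Injective x)
    {f : K[X]} (hdeg : f.degree < ((d+1 : ℕ) : WithBot ℕ)) (y : K) (c : WithTop ℝ)
    (h : ∀ i, c ≤ v (f.eval (x i) * ∏ j ∈ Finset.univ.erase i, ((x i - x j)⁻¹ * (y - x j)))) :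
    c ≤ v (f.eval y) := by
  classical
  have hvs : Set.InjOn x ↑(Finset.univ : Finset (Fin (d+1))) := fun a _ b _ hab => hx hab
  have hcard : f.degree < ((Finset.univ : Finset (Fin (d+1))).card : WithBot ℕ) := by
    simpa using hdeg
  have heq := Lagrange.eq_interpolate hvs hcard
  have hev : f.eval y = ∑ i ∈ Finset.univ,
      f.eval (x i) * ∏ j ∈ Finset.univ.erase i, ((x i - x j)⁻¹ * (y - x j)) := by
    conv_lhs => rw [heq]
    rw [Lagrange.interpolate_apply, Polynomial.eval_finset_sum]
    refine Finset.sum_congr rfl fun i _ => ?_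
    rw [Polynomial.eval_mul, Polynomial.eval_C, Lagrange.basis, Polynomial.eval_prod]
    refine congrArg _ (Finset.prod_congr rfl fun j _ => ?_)
    simp [Lagrange.basisDivisor]
  rw [hev]
  exact v.map_le_sum fun i _ => h i

lemma vne_of_coe {x : K} {r : ℝ} (h : v x = (r : WithTop ℝ)) : x ≠ 0 := by
  intro h0
  rw [h0, AddValuation.map_zero] at h
  exact (WithTop.coe_ne_top h.symm)

lemma deg_lt (f : K[X]) : f.degree < ((f.natDegree + 1 : ℕ) : WithBot ℕ) :=
  lt_of_le_of_lt Polynomial.degree_le_natDegree (by exact_mod_cast lt_add_one f.natDegree)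

lemma ball_le (α y z : K) (γ : ℝ) (hy : (γ : WithTop ℝ) ≤ v (y - α))
    (hz : v (z - α) = (γ : WithTop ℝ)) : (γ : WithTop ℝ) ≤ v (y - z) := by
  have : y - z = (y - α) - (z - α) := by ring
  rw [this]
  exact v.map_le_sub hy (le_of_eq hz.symm)

lemma stationary_closure (α : K) (γ : ℝ) (s : ℕ → K)
    (hsv : ∀ n, v (s n - α) = (γ : WithTop ℝ))
    (hpair : ∀ n m : ℕ, n ≠ m → v (s n - s m) = (γ : WithTop ℝ))
    (y : K) (hy : (γ : WithTop ℝ) ≤ v (y - α))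
    (f : K[X]) (hf : ∀ n, 0 ≤ v (f.eval (s n))) :
    0 ≤ v (f.eval y) := by
  classical
  set d := f.natDegree with hd
  have hx : Function.Injective (fun i : Fin (d+1) => s i.val) := by
    intro i j hij
    by_contra hne
    have hv := hpair i.val j.val (fun h => hne (Fin.ext h))
    exact WithTop.coe_ne_top (by rw [← hv, sub_eq_zero_of_eq hij, AddValuation.map_zero])
  refine interp_bound v _ hx (deg_lt f) y 0 fun i => ?_
  have := term_bound v (Finset.univ.erase i) (f.eval (s i.val)) (hf i.val)
    (fun j : Fin (d+1) => s i.val - s j.val) (fun j : Fin (d+1) => y - s j.val)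
    (fun _ => γ) γ
    (fun j hj => hpair i.val j.val
      (fun h => (Finset.mem_erase.mp hj).1 (Fin.ext h).symm))
    (fun j _ => ball_le v α y (s j.val) γ hy (hsv j.val))
  simpa using this

lemma sphere_le (α s t : K) (γ : ℝ) (hs : v (s - α) = (γ : WithTop ℝ))
    (ht : v (t - α) = (γ : WithTop ℝ)) : (γ : WithTop ℝ) ≤ v (s - t) :=
  ball_le v α s t γ (le_of_eq hs.symm) ht

lemma divergent_closure (α : K) (γ : ℝ) (s : ℕ → K) (u : ℕ → ℝ)
    (hsv : ∀ n, v (s n - α) = (γ : WithTop ℝ))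
    (hu : StrictAnti u) (hul : Tendsto u atTop (𝓝 γ))
    (hus : ∀ n, v (s (n+1) - s n) = ((u n : ℝ) : WithTop ℝ))
    (t : K) (htv : v (t - α) = (γ : WithTop ℝ))
    (hts : ∀ n, v (t - s (n+1)) < v (t - s n))
    (y : K) (hy : (γ : WithTop ℝ) ≤ v (y - α))
    (f : K[X]) (hft : 0 ≤ v (f.eval t)) (hfs : ∀ n, 0 ≤ v (f.eval (s n))) :
    0 ≤ v (f.eval y) := by
  classical
  set d := f.natDegree with hd
  -- γ ≤ u n, γ < u n
  have hγle : ∀ n, γ ≤ u n := fun n =>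
    le_of_tendsto hul (Filter.eventually_atTop.2 ⟨n, fun m hm => hu.antitone hm⟩)
  have hγlt : ∀ n, γ < u n := fun n => lt_of_le_of_lt (hγle (n+1)) (hu (lt_add_one n))
  -- value of t - s (m+1)
  have hw : ∀ m, v (t - s (m+1)) = ((u m : ℝ) : WithTop ℝ) := by
    intro m
    have h1 : s (m+1) - s m = (t - s m) - (t - s (m+1)) := by ring
    have h2 := hus m
    rw [h1, AddValuation.map_sub_eq_of_lt_right v (hts m)] at h2
    exact h2
  -- chain decreasing: v (t - s a) in a
  have hwanti : ∀ a b : ℕ, a < b → v (t - s b) < v (t - s a) := by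
    intro a b hab
    induction b with
    | zero => omega
    | succ n ih =>
      rcases Nat.lt_succ_iff_lt_or_eq.mp hab with h | h
      · exact lt_trans (hts n) (ih h)
      · rw [h]; exact hts n
  -- main bound for each n
  have key : ∀ n : ℕ, (((d : ℝ) * (γ - u n) : ℝ) : WithTop ℝ) ≤ v (f.eval y) := by
    intro n
    set z : ℕ → K := fun m => if m = 0 then t else s (n + m) with hz
    have hzd : ∀ a b : ℕ, a < b → v (z a - z b) = ((u (n + b - 1) : ℝ) : WithTop ℝ) := by
      intro a b hab
      have hb1 : 1 ≤ b := by omega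
      have hnb : n + b = (n + b - 1) + 1 := by omega
      rcases Nat.eq_zero_or_pos a with ha | ha
      · subst ha
        simp only [hz, if_pos rfl, if_neg (by omega : ¬ b = 0)]
        rw [hnb]; exact hw (n + b - 1)
      · have h1 : z a - z b = (t - s (n + b)) - (t - s (n + a)) := by
          simp only [hz, if_neg (by omega : ¬ a = 0), if_neg (by omega : ¬ b = 0)]; ring
        rw [h1, AddValuation.map_sub_eq_of_lt_left v (hwanti (n+a) (n+b) (by omega))]
        rw [hnb]; exact hw (n + b - 1)
    have hzne : ∀ a b : ℕ, a < b → z a ≠ z b := by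
      intro a b hab he
      have := hzd a b hab
      rw [sub_eq_zero_of_eq he, AddValuation.map_zero] at this
      exact WithTop.coe_ne_top this.symm
    have hx : Function.Injective (fun i : Fin (d+1) => z i.val) := by
      intro i j hij
      by_contra hne
      have : i.val ≠ j.val := fun h => hne (Fin.ext h)
      rcases lt_or_gt_of_ne this with h | h
      · exact hzne _ _ h hij
      · exact hzne _ _ h hij.symm
    have hfz : ∀ m : ℕ, 0 ≤ v (f.eval (z m)) := by
      intro m
      by_cases hm : m = 0
      · simpa [hz, hm] using hft
      · simpa [hz, hm] using hfs (n + m)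
    have hzα : ∀ m : ℕ, v (z m - α) = (γ : WithTop ℝ) := by
      intro m
      by_cases hm : m = 0
      · simpa [hz, hm] using htv
      · simpa [hz, hm] using hsv (n + m)
    refine interp_bound v (fun i : Fin (d+1) => z i.val) hx (deg_lt f) y _ fun i => ?_
    have hterm := term_bound v (Finset.univ.erase i) (f.eval (z i.val)) (hfz i.val)
      (fun j : Fin (d+1) => z i.val - z j.val) (fun j : Fin (d+1) => y - z j.val)
      (fun j : Fin (d+1) => u (n + max i.val j.val - 1)) γ
      (fun j hj => by
        have hne : j.val ≠ i.val := fun h => (Finset.mem_erase.mp hj).1 (Fin.ext h)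
        rcases lt_or_gt_of_ne hne with h | h
        · rw [AddValuation.map_sub_swap]
          rw [hzd j.val i.val h]
          congr 2
          omega
        · rw [hzd i.val j.val h]
          congr 2
          omega)
      (fun j _ => ball_le v α y (z j.val) γ hy (hzα j.val))
    refine le_trans ?_ hterm
    rw [WithTop.coe_le_coe]
    have hcard : (Finset.univ.erase i).card = d := by
      rw [Finset.card_erase_of_mem (Finset.mem_univ i)]
      simp
    calc (d : ℝ) * (γ - u n) = ∑ _j ∈ Finset.univ.erase i, (γ - u n) := by
          rw [Finset.sum_const, hcard, nsmul_eq_mul]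
      _ ≤ ∑ j ∈ Finset.univ.erase i, (γ - u (n + max i.val j.val - 1)) := by
          refine Finset.sum_le_sum fun j hj => ?_
          have hne : j.val ≠ i.val := fun h => (Finset.mem_erase.mp hj).1 (Fin.ext h)
          have : u (n + max i.val j.val - 1) ≤ u n := hu.antitone (by omega)
          linarith
  -- conclude by limit
  rcases eq_or_ne (v (f.eval y)) ⊤ with h | h
  · rw [h]; exact le_top
  · obtain ⟨r, hr⟩ := WithTop.ne_top_iff_exists.mp h
    rw [← hr, ← WithTop.coe_zero, WithTop.coe_le_coe]
    have hlim : Tendsto (fun n => (d : ℝ) * (γ - u n)) atTop (𝓝 ((d : ℝ) * (γ - γ))) :=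
      (tendsto_const_nhds.sub hul).const_mul _
    rw [sub_self, mul_zero] at hlim
    refine le_of_tendsto hlim (Filter.Eventually.of_forall fun n => ?_)
    have := key n
    rw [← hr, WithTop.coe_le_coe] at this
    exact this

lemma rec2 (T : Set K) (γ : ℝ) (t : K)
    (h : ∀ δ : ℝ, γ < δ → ∃ x ∈ T, (γ : WithTop ℝ) < v (t - x) ∧ v (t - x) < ((δ : ℝ) : WithTop ℝ)) :
    ∃ s : ℕ → K, (∀ n, s n ∈ T) ∧ (∀ n, (γ : WithTop ℝ) < v (t - s n)) ∧
      (∀ n, v (t - s (n+1)) < v (t - s n)) ∧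
      (∀ n : ℕ, v (t - s n) < ((γ + 1/(n+1) : ℝ) : WithTop ℝ)) := by
  classical
  set P : ℕ → K → Prop := fun n x => x ∈ T ∧ (γ : WithTop ℝ) < v (t - x) ∧
    v (t - x) < ((γ + 1/(n+1) : ℝ) : WithTop ℝ) with hP
  have h0 : ∃ x, P 0 x := by
    obtain ⟨x, hx1, hx2, hx3⟩ := h (γ + 1) (by linarith)
    exact ⟨x, hx1, hx2, by norm_num; exact hx3⟩
  have hstep : ∀ (n : ℕ) (x : K), P n x → ∃ y, P (n+1) y ∧ v (t - y) < v (t - x) := by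
    intro n x ⟨hx1, hx2, hx3⟩
    obtain ⟨r, hr⟩ := WithTop.ne_top_iff_exists.mp (ne_top_of_lt hx3)
    have hγr : γ < r := by rw [← WithTop.coe_lt_coe]; rw [hr]; exact hx2
    set δ : ℝ := min r (γ + 1/(n+2)) with hδ
    have hγδ : γ < δ := lt_min hγr (lt_add_of_pos_right γ (show (0:ℝ) < 1/(n+2) by positivity))
    obtain ⟨y, hy1, hy2, hy3⟩ := h δ hγδ
    refine ⟨y, ⟨hy1, hy2, ?_⟩, ?_⟩
    · refine lt_of_lt_of_le hy3 ?_
      rw [WithTop.coe_le_coe]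
      have : δ ≤ γ + 1/(n+2) := min_le_right _ _
      refine this.trans (le_of_eq ?_)
      push_cast
      ring_nf
    · refine lt_of_lt_of_le hy3 ?_
      rw [← hr, WithTop.coe_le_coe]
      exact min_le_left _ _
  let step : (n : ℕ) → {x : K // P n x} → {x : K // P (n+1) x} := fun n p =>
    ⟨(hstep n p.1 p.2).choose, (hstep n p.1 p.2).choose_spec.1⟩
  let F : (n : ℕ) → {x : K // P n x} := fun n =>
    Nat.rec ⟨h0.choose, h0.choose_spec⟩ (fun n p => step n p) n
  have hdec : ∀ n, v (t - (F (n+1)).1) < v (t - (F n).1) := fun n =>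
    (hstep n (F n).1 (F n).2).choose_spec.2
  exact ⟨fun n => (F n).1, fun n => (F n).2.1, fun n => (F n).2.2.1, hdec,
    fun n => (F n).2.2.2⟩

lemma nsmul_mono (k : ℕ) (r : ℝ) (a : WithTop ℝ) (h : (r : WithTop ℝ) ≤ a) :
    (((k : ℝ) * r : ℝ) : WithTop ℝ) ≤ k • a := by
  cases a with
  | top =>
    rcases Nat.eq_zero_or_pos k with hk | hk
    · subst hk; simp
    · obtain ⟨m, rfl⟩ := Nat.exists_eq_succ_of_ne_zero hk.ne'
      rw [succ_nsmul]
      simp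
  | coe b =>
    rw [nsmul_coe, WithTop.coe_le_coe]
    exact mul_le_mul_of_nonneg_left (WithTop.coe_le_coe.mp h) (Nat.cast_nonneg k)

lemma vzpow (π : K) (p : ℝ) (hπ : v π = (p : WithTop ℝ)) (z : ℤ) :
    ∃ c : K, v c = ((z * p : ℝ) : WithTop ℝ) := by
  have hπ0 : π ≠ 0 := by
    intro h; rw [h, AddValuation.map_zero] at hπ; exact WithTop.coe_ne_top hπ.symm
  rcases z with n | n
  · refine ⟨π ^ n, ?_⟩
    rw [AddValuation.map_pow, hπ, nsmul_coe]
    congr 1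
  · refine ⟨(π ^ (n+1))⁻¹, ?_⟩
    have : v (π ^ (n+1)) = (((n+1 : ℕ) * p : ℝ) : WithTop ℝ) := by
      rw [AddValuation.map_pow, hπ, nsmul_coe]
    rw [vinv v this]
    congr 1
    push_cast
    ring

lemma poly_contra (S : Set K) (α : K) (γ : ℝ) (π : K) (p : ℝ)
    (hπ : v π = (p : WithTop ℝ)) (hp : 0 < p)
    (F : Finset K)
    (hFT : ∀ t ∈ F, v (t - α) = (γ : WithTop ℝ))
    (δ : K → ℝ) (hδγ : ∀ t ∈ F, γ < δ t)
    (hδ : ∀ t ∈ F, ∀ s : K, s ∈ S → v (s - α) = (γ : WithTop ℝ) →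
        (γ : WithTop ℝ) < v (s - t) → ((δ t : ℝ) : WithTop ℝ) ≤ v (s - t))
    (hcover : ∀ s : K, s ∈ S → v (s - α) = (γ : WithTop ℝ) →
        ∃ t ∈ F, (γ : WithTop ℝ) < v (s - t)) :
    ∃ f : K[X], (∀ s : K, s ∈ S → v (s - α) = (γ : WithTop ℝ) → 0 ≤ v (f.eval s)) ∧
      v (f.eval α) < 0 := by
  classical
  set m : K → ℕ := fun t => ⌈p / (δ t - γ)⌉₊ with hm
  have hmp : ∀ t ∈ F, p ≤ (m t : ℝ) * (δ t - γ) := by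
    intro t ht
    have hpos : 0 < δ t - γ := sub_pos.mpr (hδγ t ht)
    exact (div_le_iff₀ hpos).mp (Nat.le_ceil _)
  set B : ℝ := ∑ t ∈ F, (m t : ℝ) * γ with hB
  set N : ℤ := ⌊B / p⌋ + 1 with hN
  have hBlt : B / p < (N : ℝ) := by
    rw [hN]; push_cast; exact Int.lt_floor_add_one _
  have hA1 : B - (N : ℝ) * p < 0 := by
    have := (div_lt_iff₀ hp).mp hBlt
    linarith
  have hA2 : -p ≤ B - (N : ℝ) * p := by
    have h1 : (N : ℝ) ≤ B / p + 1 := by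
      rw [hN]; push_cast; linarith [Int.floor_le (B / p)]
    have h2 : (N : ℝ) * p ≤ (B / p + 1) * p := mul_le_mul_of_nonneg_right h1 hp.le
    have h3 : (B / p + 1) * p = B + p := by field_simp
    linarith
  obtain ⟨c, hc⟩ := vzpow v π p hπ (-N)
  set q : ℝ := ((-N : ℤ) : ℝ) * p with hq
  set f : K[X] := Polynomial.C c * ∏ t ∈ F, (Polynomial.X - Polynomial.C t) ^ m t with hf
  have heval : ∀ x : K, v (f.eval x) = v c + ∑ t ∈ F, (m t) • v (x - t) := by
    intro x
    rw [hf, Polynomial.eval_mul, Polynomial.eval_C, Polynomial.eval_prod, v.map_mul, vprod]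
    congr 1
    refine Finset.sum_congr rfl fun t _ => ?_
    rw [Polynomial.eval_pow, Polynomial.eval_sub, Polynomial.eval_X, Polynomial.eval_C,
      AddValuation.map_pow]
  refine ⟨f, ?_, ?_⟩
  · intro s hs hsγ
    obtain ⟨t0, ht0, hlt⟩ := hcover s hs hsγ
    have hsum1 : (((m t0 : ℝ) * δ t0 : ℝ) : WithTop ℝ) ≤ (m t0) • v (s - t0) :=
      nsmul_mono _ _ _ (hδ t0 ht0 s hs hsγ hlt)
    have hsum2 : ((∑ t ∈ F.erase t0, (m t : ℝ) * γ : ℝ) : WithTop ℝ) ≤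
        ∑ t ∈ F.erase t0, (m t) • v (s - t) := by
      rw [WithTop.coe_sum]
      exact Finset.sum_le_sum fun t ht => nsmul_mono _ _ _
        (sphere_le v α s t γ hsγ (hFT t (Finset.mem_of_mem_erase ht)))
    have hreal : (0 : ℝ) ≤ q + ((m t0 : ℝ) * δ t0 + ∑ t ∈ F.erase t0, (m t : ℝ) * γ) := by
      have h3 : (m t0 : ℝ) * γ + ∑ t ∈ F.erase t0, (m t : ℝ) * γ = B :=
        Finset.add_sum_erase F (fun t => (m t : ℝ) * γ) ht0
      have h4 := hmp t0 ht0
      rw [hq]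
      push_cast
      nlinarith [hA2]
    calc (0 : WithTop ℝ) = ((0 : ℝ) : WithTop ℝ) := rfl
      _ ≤ ((q + ((m t0 : ℝ) * δ t0 + ∑ t ∈ F.erase t0, (m t : ℝ) * γ) : ℝ) : WithTop ℝ) := by
          exact_mod_cast hreal
      _ = (q : WithTop ℝ) + ((((m t0 : ℝ) * δ t0 : ℝ) : WithTop ℝ) +
          ((∑ t ∈ F.erase t0, (m t : ℝ) * γ : ℝ) : WithTop ℝ)) := by
          rw [← WithTop.coe_add, ← WithTop.coe_add]
      _ ≤ v c + ((m t0) • v (s - t0) + ∑ t ∈ F.erase t0, (m t) • v (s - t)) := by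
          rw [hc]
          exact add_le_add le_rfl (add_le_add hsum1 hsum2)
      _ = v (f.eval s) := by
          rw [heval s, Finset.add_sum_erase F (fun t => (m t) • v (s - t)) ht0]
  · have hαt : ∀ t ∈ F, v (α - t) = (γ : WithTop ℝ) := fun t ht => by
      rw [AddValuation.map_sub_swap]; exact hFT t ht
    have hev : v (f.eval α) = ((q + B : ℝ) : WithTop ℝ) := by
      rw [heval α, hc, WithTop.coe_add]
      congr 1
      rw [hB, WithTop.coe_sum]
      refine Finset.sum_congr rfl fun t ht => ?_
      rw [hαt t ht, nsmul_coe]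
    rw [hev]
    have hqB : q + B < 0 := by rw [hq]; push_cast; linarith
    exact_mod_cast hqB

lemma fwd (π : K) (p : ℝ) (hπ : v π = (p : WithTop ℝ)) (hp : 0 < p)
    (S : Set K) (α : K) (γ : ℝ)
    (hLHS : ∀ y : K, (γ : WithTop ℝ) ≤ v (y - α) →
        ∀ f : Polynomial K,
          (∀ t, t ∈ S → v (t - α) = (γ : WithTop ℝ) → 0 ≤ v (f.eval t)) →
          0 ≤ v (f.eval y)) :
    ∃ s : ℕ → K, (∀ n, s n ∈ S ∧ v (s n - α) = (γ : WithTop ℝ)) ∧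
      (((∀ n m : ℕ, n ≠ m → v (s n - s m) = (γ : WithTop ℝ)) ∧
          (∀ n, v (α - s n) = (γ : WithTop ℝ))) ∨
        (∃ u : ℕ → ℝ, StrictAnti u ∧ Tendsto u atTop (𝓝 γ) ∧
          (∀ n, v (s (n + 1) - s n) = (u n : WithTop ℝ)) ∧
          ∃ t : K, (t ∈ S ∧ v (t - α) = (γ : WithTop ℝ)) ∧
            ∀ n, v (t - s (n + 1)) < v (t - s n))) := by
  classical
  set T : Set K := {s | s ∈ S ∧ v (s - α) = (γ : WithTop ℝ)} with hTdef
  have hTmem : ∀ x : K, x ∈ T ↔ (x ∈ S ∧ v (x - α) = (γ : WithTop ℝ)) := fun x => Iff.rfl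
  by_cases hcov : ∃ F : Finset K, ↑F ⊆ T ∧ ∀ s ∈ T, ∃ t ∈ F, (γ : WithTop ℝ) < v (s - t)
  · obtain ⟨F, hFT, hFcov⟩ := hcov
    by_cases hdiv : ∃ t ∈ F, ∀ δ : ℝ, γ < δ →
        ∃ x ∈ T, (γ : WithTop ℝ) < v (t - x) ∧ v (t - x) < ((δ : ℝ) : WithTop ℝ)
    · -- pseudo-divergent case
      obtain ⟨t, htF, hdiv⟩ := hdiv
      obtain ⟨s, hsT, hsγlt, hsdec, hsbound⟩ := rec2 v T γ t hdiv
      have htT : t ∈ T := hFT htF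
      have hex : ∀ n : ℕ, ∃ r : ℝ, (r : WithTop ℝ) = v (t - s (n+1)) :=
        fun n => WithTop.ne_top_iff_exists.mp (ne_top_of_lt (hsbound (n+1)))
      set u : ℕ → ℝ := fun n => (hex n).choose with hu
      have huv : ∀ n, (u n : WithTop ℝ) = v (t - s (n+1)) := fun n => (hex n).choose_spec
      have hustrict : StrictAnti u := strictAnti_nat_of_succ_lt (fun n => by
        have h1 := hsdec (n+1)
        rw [← huv (n+1), ← huv n] at h1
        exact_mod_cast h1)
      have hulow : ∀ n, γ < u n := fun n => by
        have h1 := hsγlt (n+1)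
        rw [← huv n] at h1
        exact_mod_cast h1
      have huhigh : ∀ n, u n ≤ γ + 1/((n : ℝ)+2) := fun n => by
        have h1 := hsbound (n+1)
        rw [← huv n] at h1
        have h2 := WithTop.coe_lt_coe.mp h1
        have h3 : ((n+1 : ℕ) : ℝ) + 1 = (n : ℝ) + 2 := by push_cast; ring
        rw [h3] at h2
        exact h2.le
      have hulim : Tendsto u atTop (𝓝 γ) := by
        have hg : Tendsto (fun n : ℕ => (n : ℝ) + 2) atTop atTop :=
          tendsto_atTop_add_const_right _ 2 tendsto_natCast_atTop_atTop
        have h0 : Tendsto (fun n : ℕ => ((n : ℝ) + 2)⁻¹) atTop (𝓝 0) :=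
          tendsto_inv_atTop_zero.comp hg
        have h2 : Tendsto (fun n : ℕ => γ + 1/((n : ℝ)+2)) atTop (𝓝 γ) := by
          simpa [one_div] using tendsto_const_nhds.add h0
        exact tendsto_of_tendsto_of_tendsto_of_le_of_le tendsto_const_nhds h2
          (fun n => (hulow n).le) huhigh
      refine ⟨s, fun n => hsT n, Or.inr ⟨u, hustrict, hulim, ?_, t, htT, hsdec⟩⟩
      intro n
      have h1 : s (n+1) - s n = (t - s n) - (t - s (n+1)) := by ring
      rw [h1, AddValuation.map_sub_eq_of_lt_right v (hsdec n), ← huv n]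
    · -- no divergence: contradiction via polynomial
      push_neg at hdiv
      have hchoice : ∀ t : K, ∃ δ : ℝ, γ < δ ∧ (t ∈ F → ∀ x : K, x ∈ S →
          v (x - α) = (γ : WithTop ℝ) → (γ : WithTop ℝ) < v (x - t) →
          ((δ : ℝ) : WithTop ℝ) ≤ v (x - t)) := by
        intro t
        by_cases htF : t ∈ F
        · obtain ⟨δ, hδ1, hδ2⟩ := hdiv t htF
          refine ⟨δ, hδ1, fun _ x hxS hxγ hlt => ?_⟩
          have hxT : x ∈ T := ⟨hxS, hxγ⟩
          have := hδ2 x hxT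
          rw [AddValuation.map_sub_swap v t x] at this
          exact this hlt
        · exact ⟨γ + 1, by linarith, fun h => absurd h htF⟩
      choose δf hδf1 hδf2 using hchoice
      obtain ⟨f, hf1, hf2⟩ := poly_contra v S α γ π p hπ hp F
        (fun t ht => (hFT ht).2) δf (fun t _ => hδf1 t)
        (fun t ht s hsS hsγ hlt => hδf2 t ht s hsS hsγ hlt)
        (fun s hsS hsγ => hFcov s ⟨hsS, hsγ⟩)
      exact absurd (hLHS α (by rw [sub_self, AddValuation.map_zero]; exact le_top) f hf1)
        (not_le.mpr hf2)
  · -- no cover: pseudo-stationary case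
    have hT' : ∀ F : Finset K, ↑F ⊆ T → ∃ s ∈ T, ∀ t ∈ F, v (s - t) = (γ : WithTop ℝ) := by
      intro F hF
      push_neg at hcov
      obtain ⟨s, hsT, hs⟩ := hcov F hF
      exact ⟨s, hsT, fun t ht => le_antisymm (hs t ht)
        (sphere_le v α s t γ hsT.2 ((hF ht).2))⟩
    obtain ⟨s, hsT, hpair⟩ := rec1 T (fun a b => v (a - b) = (γ : WithTop ℝ)) hT'
    refine ⟨s, fun n => hsT n, Or.inl ⟨?_, ?_⟩⟩
    · intro n m hnm
      rcases lt_or_gt_of_ne hnm with h | h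
      · rw [AddValuation.map_sub_swap]; exact hpair n m h
      · exact hpair m n h
    · intro n
      rw [AddValuation.map_sub_swap]
      exact (hsT n).2

lemma dvr_no_div (ρ : ℝ) (hρ : 0 < ρ)
    (hd : ∀ x : K, x ≠ 0 → ∃ n : ℤ, v x = (((n : ℝ) * ρ : ℝ) : WithTop ℝ))
    (γ : ℝ) (s : ℕ → K) (u : ℕ → ℝ) (hu : StrictAnti u) (hul : Tendsto u atTop (𝓝 γ))
    (hus : ∀ n, v (s (n+1) - s n) = ((u n : ℝ) : WithTop ℝ)) : False := by
  have hne : ∀ n, s (n+1) - s n ≠ 0 := fun n h => by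
    have h2 := hus n
    rw [h, AddValuation.map_zero] at h2
    exact WithTop.coe_ne_top h2.symm
  choose k hk using fun n => hd _ (hne n)
  have huk : ∀ n, u n = (k n : ℝ) * ρ := fun n => by
    have h2 := (hus n).symm.trans (hk n)
    exact_mod_cast h2
  have hγle : ∀ n, γ ≤ u n := fun n =>
    le_of_tendsto hul (Filter.eventually_atTop.2 ⟨n, fun m hm => hu.antitone hm⟩)
  have hkdec : ∀ n, k (n+1) < k n := fun n => by
    have h1 : u (n+1) < u n := hu (lt_add_one n)
    rw [huk n, huk (n+1)] at h1
    exact_mod_cast lt_of_mul_lt_mul_right h1 hρ.le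
  have hkle : ∀ n : ℕ, k n ≤ k 0 - n := by
    intro n
    induction n with
    | zero => simp
    | succ m ih =>
      have h2 := hkdec m
      push_cast
      push_cast at ih
      omega
  obtain ⟨n, hn⟩ := exists_nat_gt ((k 0 : ℝ) - γ / ρ)
  have h1 : γ ≤ (k n : ℝ) * ρ := (hγle n).trans_eq (huk n)
  have h2 : (k n : ℝ) ≤ (k 0 : ℝ) - n := by exact_mod_cast hkle n
  have h3 : γ / ρ ≤ (k n : ℝ) := (div_le_iff₀ hρ).mpr h1
  linarith

end Helpers

/-- Let `V` be a rank-one valuation domain, `S ⊆ V`, `α ∈ V`,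
`γ ∈ Γ_v`, and `S_{α,γ} = {s ∈ S : v (s - α) = γ}`.  Then `B(α,γ)` is contained in
the polynomial closure of `S_{α,γ}` iff `S_{α,γ}` contains a pseudo-monotone
sequence `E` with breadth `γ` which is either pseudo-stationary with pseudo-limit
`α`, or pseudo-divergent with a pseudo-limit belonging to `S_{α,γ}`.  If `V` is
discrete (a DVR), only the pseudo-stationary case occurs. -/
theorem stmt18 {K : Type*} [Field K] (v : AddValuation K (WithTop ℝ))
    (hrank : ∃ π : K, 0 < v π ∧ v π ≠ ⊤)
    (S : Set K) (hS : ∀ s ∈ S, 0 ≤ v s)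
    (α : K) (hα : 0 ≤ v α)
    (γ : ℝ) (hγ : ∃ x : K, x ≠ 0 ∧ v x = (γ : WithTop ℝ)) :
    ((∀ y : K, (γ : WithTop ℝ) ≤ v (y - α) →
        ∀ f : Polynomial K,
          (∀ t, t ∈ S → v (t - α) = (γ : WithTop ℝ) → 0 ≤ v (f.eval t)) →
          0 ≤ v (f.eval y)) ↔
      (∃ s : ℕ → K, (∀ n, s n ∈ S ∧ v (s n - α) = (γ : WithTop ℝ)) ∧
        (((∀ n m : ℕ, n ≠ m → v (s n - s m) = (γ : WithTop ℝ)) ∧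
            (∀ n, v (α - s n) = (γ : WithTop ℝ))) ∨
          (∃ u : ℕ → ℝ, StrictAnti u ∧ Tendsto u atTop (𝓝 γ) ∧
            (∀ n, v (s (n + 1) - s n) = (u n : WithTop ℝ)) ∧
            ∃ t : K, (t ∈ S ∧ v (t - α) = (γ : WithTop ℝ)) ∧
              ∀ n, v (t - s (n + 1)) < v (t - s n))))) ∧
    ((∃ ρ : ℝ, 0 < ρ ∧ ∀ x : K, x ≠ 0 → ∃ n : ℤ, v x = (((n : ℝ) * ρ : ℝ) : WithTop ℝ)) →
      ((∀ y : K, (γ : WithTop ℝ) ≤ v (y - α) →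
          ∀ f : Polynomial K,
            (∀ t, t ∈ S → v (t - α) = (γ : WithTop ℝ) → 0 ≤ v (f.eval t)) →
            0 ≤ v (f.eval y)) ↔
        (∃ s : ℕ → K, (∀ n, s n ∈ S ∧ v (s n - α) = (γ : WithTop ℝ)) ∧
          (∀ n m : ℕ, n ≠ m → v (s n - s m) = (γ : WithTop ℝ)) ∧
          (∀ n, v (α - s n) = (γ : WithTop ℝ))))) := by
  obtain ⟨π, hπ1, hπ2⟩ := hrank
  obtain ⟨p, hp⟩ := WithTop.ne_top_iff_exists.mp hπ2
  have hp0 : 0 < p := by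
    have h2 := hπ1
    rw [← hp] at h2
    exact_mod_cast h2
  have part1 : (∀ y : K, (γ : WithTop ℝ) ≤ v (y - α) →
        ∀ f : Polynomial K,
          (∀ t, t ∈ S → v (t - α) = (γ : WithTop ℝ) → 0 ≤ v (f.eval t)) →
          0 ≤ v (f.eval y)) ↔
      (∃ s : ℕ → K, (∀ n, s n ∈ S ∧ v (s n - α) = (γ : WithTop ℝ)) ∧
        (((∀ n m : ℕ, n ≠ m → v (s n - s m) = (γ : WithTop ℝ)) ∧
            (∀ n, v (α - s n) = (γ : WithTop ℝ))) ∨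
          (∃ u : ℕ → ℝ, StrictAnti u ∧ Tendsto u atTop (𝓝 γ) ∧
            (∀ n, v (s (n + 1) - s n) = (u n : WithTop ℝ)) ∧
            ∃ t : K, (t ∈ S ∧ v (t - α) = (γ : WithTop ℝ)) ∧
              ∀ n, v (t - s (n + 1)) < v (t - s n)))) := by
    constructor
    · exact fwd v π p hp.symm hp0 S α γ
    · rintro ⟨s, hs, hcase⟩ y hy f hf
      rcases hcase with ⟨hpair, hαs⟩ | ⟨u, hu1, hu2, hu3, t, ht, ht2⟩
      · exact stationary_closure v α γ s (fun n => (hs n).2) hpair y hy f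
          (fun n => hf _ (hs n).1 (hs n).2)
      · exact divergent_closure v α γ s u (fun n => (hs n).2) hu1 hu2 hu3 t ht.2 ht2 y hy f
          (hf t ht.1 ht.2) (fun n => hf _ (hs n).1 (hs n).2)
  refine ⟨part1, ?_⟩
  rintro ⟨ρ, hρ, hd⟩
  constructor
  · intro h
    rcases part1.mp h with ⟨s, hs, hcase⟩
    rcases hcase with h1 | ⟨u, hu1, hu2, hu3, -⟩
    · exact ⟨s, hs, h1.1, h1.2⟩
    · exact (dvr_no_div v ρ hρ hd γ s u hu1 hu2 hu3).elim
  · rintro ⟨s, hs, h1, h2⟩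
    exact part1.mpr ⟨s, hs, Or.inl ⟨h1, h2⟩⟩
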